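/- If the signed distance Dist(s, J) > 0 then s ∈ J, and if Dist(s, J) < 0 then s ∉ J. In particular, positive robustness of an atomic predicate implies Boolean satisfaction. -/

import Mathlib

open Metric Classical

/-- The signed distance to a set `J`. -/
noncomputable def signedDistSet {d : ℕ} (J : Set (EuclideanSpace ℝ (Fin d)))
    (s : EuclideanSpace ℝ (Fin d)) : ℝ :=
  if s ∈ J then Metric.infDist s Jᶜ else - Metric.infDist s J

theorem signedDist_sign {d : ℕ} (J : Set (EuclideanSpace ℝ (Fin d)))
    (s : EuclideanSpace ℝ (Fin d)) :
    (0 < signedDistSet J s → s ∈ J) ∧ (signedDistSet J s < 0 → s ∉ J) := by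
  constructor
  · intro h
    by_contra hs
    simp only [signedDistSet, if_neg hs] at h
    have := Metric.infDist_nonneg (s := J) (x := s)
    linarith
  · intro h hs
    simp only [signedDistSet, if_pos hs] at h
    have := Metric.infDist_nonneg (s := Jᶜ) (x := s)
    linarith
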